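/- A sequence x_1,...,x_n of elements of R is an a-filter regular M-sequence if and only if for every prime ideal p in Supp(M) \ V(a), the images x_1/1,...,x_n/1 form a weak M_p-regular sequence in the localization R_p. -/

import Mathlib

open CategoryTheory CategoryTheory.Limits Opposite

universe u

noncomputable section

namespace Paper

variable (R : Type u) [CommRing R]

/-- `x` is an `a`-filter regular `M`-sequence. -/
def IsFilterRegular (a : Ideal R) (M : Type u) [AddCommGroup M] [Module R M]
    {n : ℕ} (x : Fin n → R) : Prop :=
  ∀ i : Fin n, ∀ p ∈ associatedPrimes R
      (M ⧸ (Ideal.span (x '' {j | j < i}) • (⊤ : Submodule R M))),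
    ¬ a ≤ p → x i ∉ p

/-- `y` is a weak regular sequence on `X`. -/
def IsWeakRegular (S : Type*) [CommRing S] (X : Type*) [AddCommGroup X] [Module S X]
    {n : ℕ} (y : Fin n → S) : Prop :=
  ∀ i : Fin n, ∀ m : X ⧸ (Ideal.span (y '' {j | j < i}) • (⊤ : Submodule S X)),
    y i • m = 0 → m = 0

/-- The `i`-th Ext module `Ext^i_R(M, N)`. -/
abbrev ExtModule (i : ℕ) (M N : Type u) [AddCommGroup M] [Module R M]
    [AddCommGroup N] [Module R N] : ModuleCat.{u} R :=
  ((Ext R (ModuleCat.{u} R) i).obj (op (ModuleCat.of R M))).obj (ModuleCat.of R N)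

/-- The directed system `M/a^t M`. -/
theorem mapQ_trans {M : Type u} [AddCommGroup M] [Module R M] (p q r : Submodule R M)
    (h1 : p ≤ q) (h2 : q ≤ r) :
    Submodule.mapQ p r LinearMap.id (fun _ hm => h2 (h1 hm)) =
      (Submodule.mapQ q r LinearMap.id (fun _ hm => h2 hm)).comp
        (Submodule.mapQ p q LinearMap.id (fun _ hm => h1 hm)) := by
  ext x
  simp [Submodule.mapQ_apply]

/-- The directed system `M/a^t M`. -/
def quotPowersDiagram (a : Ideal R) (M : Type u) [AddCommGroup M] [Module R M] :
    ℕᵒᵖ ⥤ ModuleCat.{u} R where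
  obj t := ModuleCat.of R (M ⧸ ((a ^ (unop t)) • (⊤ : Submodule R M)))
  map {t t'} w := ModuleCat.ofHom (Submodule.mapQ _ _ LinearMap.id
    (fun m hm => Submodule.smul_mono (Ideal.pow_le_pow_right w.unop.down.down) le_rfl hm))
  map_id t := by apply ModuleCat.hom_ext; apply Submodule.linearMap_qext; rfl
  map_comp {t t' t''} f g := ModuleCat.hom_ext <|
    mapQ_trans R _ _ _
      (Submodule.smul_mono (Ideal.pow_le_pow_right f.unop.down.down) le_rfl)
      (Submodule.smul_mono (Ideal.pow_le_pow_right g.unop.down.down) le_rfl)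

/-- The generalized local cohomology module `H^i_a(M, N) = colim_t Ext^i(M/a^t M, N)`. -/
def glc (a : Ideal R) (i : ℕ) (M N : Type u) [AddCommGroup M] [Module R M]
    [AddCommGroup N] [Module R N] : ModuleCat.{u} R :=
  colimit (((quotPowersDiagram R a M).op ⋙ Ext R (ModuleCat.{u} R) i) ⋙
    (evaluation _ _).obj (ModuleCat.of R N))

/-- The `a`-filter grade of `b` on `M`. -/
def filterGrade (a b : Ideal R) (M : Type u) [AddCommGroup M] [Module R M] : ℕ∞ :=
  sSup {n : ℕ∞ | ∃ k : ℕ, n = k ∧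
    ∃ x : Fin k → R, (∀ i, x i ∈ b) ∧ IsFilterRegular R a M x}

/-- `M` has a projective resolution of length at most `d`. -/
def HasProjDimLE (M : Type u) [AddCommGroup M] [Module R M] (d : ℕ) : Prop :=
  ∃ P : ProjectiveResolution (ModuleCat.of R M), ∀ i : ℕ, d < i → IsZero (P.complex.X i)

/-- The projective dimension of `M` (as an element of `ℕ∞`, with `⊤` meaning infinite). -/
def projDim (M : Type u) [AddCommGroup M] [Module R M] : ℕ∞ :=
  sInf {n : ℕ∞ | ∃ k : ℕ, n = k ∧ HasProjDimLE R M k}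

/-- The Krull dimension of a module, `dim M = dim R/Ann M`. -/
def moduleDim (M : Type u) [AddCommGroup M] [Module R M] : WithBot (WithTop ℕ) :=
  ringKrullDim (R ⧸ Module.annihilator R M)

/-- `cd_a(M, N)`: the greatest `i` with `H^i_a(M, N) ≠ 0`. -/
def cohomDim (a : Ideal R) (M N : Type u) [AddCommGroup M] [Module R M]
    [AddCommGroup N] [Module R N] : WithBot ℕ∞ :=
  sSup {i : WithBot ℕ∞ | ∃ k : ℕ, i = (k : ℕ∞) ∧ Nontrivial (glc R a k M N)}

/-- A nonzero module is secondary if every scalar acts surjectively or nilpotently. -/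
def IsSecondary (X : Type*) [AddCommGroup X] [Module R X] : Prop :=
  Nontrivial X ∧ ∀ r : R,
    Function.Surjective (fun x : X => r • x) ∨ r ∈ (Module.annihilator R X).radical

/-- The attached primes of `X`: the radicals of the annihilators of the terms of a
minimal secondary representation of `X`. -/
def attachedPrimes (X : Type u) [AddCommGroup X] [Module R X] : Set (Ideal R) :=
  {p | ∃ (k : ℕ) (S : Fin k → Submodule R X),
    (∀ i, IsSecondary R ↥(S i)) ∧ (⨆ i, S i) = ⊤ ∧
    (Function.Injective fun i => (Module.annihilator R ↥(S i)).radical) ∧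
    (∀ i : Fin k, (⨆ j ∈ {j | j ≠ i}, S j) ≠ ⊤) ∧
    ∃ i, (Module.annihilator R ↥(S i)).radical = p}

end Paper

open Paper CategoryTheory CategoryTheory.Limits

open IsLocalizedModule in
lemma aux_localized'_smul_top {R S M N : Type*} [CommRing R] [CommRing S]
    [AddCommGroup M] [AddCommGroup N] [Module R M] [Module R N] [Algebra R S]
    [Module S N] [IsScalarTower R S N]
    (p : Submonoid R) [IsLocalization p S] (f : M →ₗ[R] N) [IsLocalizedModule p f]
    (I : Ideal R) :
    (I • (⊤ : Submodule R M)).localized' S p f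
      = (I.map (algebraMap R S)) • (⊤ : Submodule S N) := by
  apply le_antisymm
  · rintro _ ⟨m, hm, s, rfl⟩
    refine Submodule.smul_induction_on hm (fun r hr n _ => ?_) (fun m₁ m₂ h₁ h₂ => ?_)
    · rw [IsLocalizedModule.mk'_smul, ← algebraMap_smul S r]
      exact Submodule.smul_mem_smul (Ideal.mem_map_of_mem _ hr) trivial
    · rw [IsLocalizedModule.mk'_add]
      exact add_mem h₁ h₂
  · rw [Submodule.smul_le]
    intro r hr n _
    have key : ∀ r ∈ Ideal.map (algebraMap R S) I, ∀ n : N,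
        r • n ∈ (I • (⊤ : Submodule R M)).localized' S p f := by
      intro r hr
      refine Submodule.span_induction (fun y hy => ?_) (fun n => by simp)
        (fun y z _ _ hy hz n => by rw [add_smul]; exact add_mem (hy n) (hz n))
        (fun c y _ hy n => by rw [smul_eq_mul, mul_smul]; exact Submodule.smul_mem _ c (hy n)) hr
      obtain ⟨r₀, hr₀, rfl⟩ := hy
      intro n
      obtain ⟨⟨m, s⟩, rfl⟩ := IsLocalizedModule.mk'_surjective p f n
      refine ⟨r₀ • m, Submodule.smul_mem_smul hr₀ trivial, s, ?_⟩
      rw [IsLocalizedModule.mk'_smul, algebraMap_smul]; rfl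
    exact key r hr n

lemma aux_colon_bot_eq {R M : Type*} [CommRing R] [AddCommGroup M] [Module R M] (x : M) :
    (⊥ : Submodule R M).colon {x} = (R ∙ x).annihilator := by
  ext r
  simp [Submodule.mem_colon_singleton, Submodule.mem_annihilator_span_singleton]

lemma aux_comap_ass {R : Type*} [CommRing R] [IsNoetherianRing R] {S : Type*} [CommRing S]
    [Algebra R S] (p : Ideal R) [p.IsPrime] [IsLocalization p.primeCompl S]
    {N : Type*} [AddCommGroup N] [Module R N]
    {Q : Type*} [AddCommGroup Q] [Module R Q] [Module S Q] [IsScalarTower R S Q]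
    (g : N →ₗ[R] Q) [IsLocalizedModule p.primeCompl g]
    {q' : Ideal S} (hq' : IsAssociatedPrime q' Q) :
    IsAssociatedPrime (q'.comap (algebraMap R S)) N ∧ q'.comap (algebraMap R S) ≤ p := by
  classical
  haveI : IsNoetherianRing S := IsLocalization.isNoetherianRing p.primeCompl S ‹_›
  obtain ⟨hq'p, m, hq'm⟩ := isAssociatedPrime_iff.mp hq'
  rw [aux_colon_bot_eq] at hq'm
  subst hq'm
  set φ := algebraMap R S with hφ
  have hqp : (((S ∙ m).annihilator).comap φ) ≤ p := by
    intro r hr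
    by_contra hrp
    exact hq'p.ne_top (Ideal.eq_top_of_isUnit_mem _ hr
      (IsLocalization.map_units S (⟨r, hrp⟩ : p.primeCompl)))
  obtain ⟨⟨n, s⟩, hns⟩ := IsLocalizedModule.mk'_surjective p.primeCompl g m
  have hgn : g n = (s : R) • m := by
    rw [← hns]
    exact (IsLocalizedModule.mk'_cancel' g n s).symm
  obtain ⟨T, hT⟩ := (IsNoetherian.noetherian (((S ∙ m).annihilator).comap φ) : _)
  have hc : ∀ r : {y // y ∈ T}, ∃ c : p.primeCompl, (c : R) • ((r : R) • n) = 0 := by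
    rintro ⟨r, hrT⟩
    have hrq : r ∈ ((S ∙ m).annihilator).comap φ := hT ▸ Ideal.subset_span hrT
    have hrm : φ r • m = 0 := (Submodule.mem_annihilator_span_singleton _ _).mp hrq
    have hz : g (r • n) = 0 := by
      rw [map_smul, hgn, smul_comm, ← algebraMap_smul S r m, hrm, smul_zero]
    obtain ⟨c, hc⟩ := (IsLocalizedModule.eq_zero_iff p.primeCompl g).mp hz
    exact ⟨c, by simpa [Submonoid.smul_def] using hc⟩
  choose cf hcf using hc
  set c : p.primeCompl := ∏ r ∈ T.attach, cf r with hcdef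
  have hcoe : (c : R) = ∏ t ∈ T.attach, ((cf t : R)) := by
    rw [hcdef]; exact SubmonoidClass.coe_finset_prod _ _
  refine ⟨isAssociatedPrime_iff.mpr ⟨Ideal.IsPrime.comap φ (hK := hq'p), (c : R) • n,
    (le_antisymm ?_ ?_).trans (aux_colon_bot_eq _).symm⟩, hqp⟩
  · rw [← hT]
    refine Ideal.span_le.mpr fun r hrT => (Submodule.mem_annihilator_span_singleton _ _).mpr ?_
    have h0 : (c : R) • ((r : R) • n) = 0 := by
      rw [hcoe, ← Finset.mul_prod_erase T.attach _ (Finset.mem_attach T ⟨r, hrT⟩),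
        mul_comm, mul_smul, hcf ⟨r, hrT⟩, smul_zero]
    rw [smul_comm]
    exact h0
  · intro r hr
    have hr0 : r • ((c : R) • n) = 0 := (Submodule.mem_annihilator_span_singleton _ _).mp hr
    have : φ r • m = 0 := by
      have hz : g (r • ((c : R) • n)) = 0 := by rw [hr0, map_zero]
      rw [map_smul, map_smul, hgn] at hz
      rw [← algebraMap_smul S r, ← algebraMap_smul S (c : R), ← algebraMap_smul S (s : R)] at hz
      rw [smul_comm (φ r), smul_comm (φ r)] at hz
      have hz2 := ((IsLocalization.map_units S c).smul_eq_zero).mp hz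
      exact ((IsLocalization.map_units S s).smul_eq_zero).mp hz2
    exact Ideal.mem_comap.mpr ((Submodule.mem_annihilator_span_singleton _ _).mpr this)



/-- `x` is an `a`-filter regular `M`-sequence iff for all primes
`p ∈ Supp M \ V(a)`, the images `x_i/1` form a weak `M_p`-sequence. -/
theorem stmt1 {R : Type u} [CommRing R] [IsNoetherianRing R] (a : Ideal R)
    (M : Type u) [AddCommGroup M] [Module R M] [Module.Finite R M]
    {n : ℕ} (x : Fin n → R) :
    Paper.IsFilterRegular R a M x ↔
      ∀ p : PrimeSpectrum R, p ∈ Module.support R M → ¬ a ≤ p.asIdeal →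
        Paper.IsWeakRegular (Localization.AtPrime p.asIdeal)
          (LocalizedModule p.asIdeal.primeCompl M)
          (fun i => algebraMap R (Localization.AtPrime p.asIdeal) (x i)) := by
    classical
  constructor
  · intro h p hp hap i m hm
    set S := Localization.AtPrime p.asIdeal with hS
    set K : Submodule R M := Ideal.span (x '' {j | j < i}) • ⊤ with hK
    have hEq : K.localized p.asIdeal.primeCompl =
        Ideal.span ((fun j => algebraMap R S (x j)) '' {j | j < i}) •
          (⊤ : Submodule S (LocalizedModule p.asIdeal.primeCompl M)) := by
      rw [hK]
      exact (aux_localized'_smul_top p.asIdeal.primeCompl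
        (LocalizedModule.mkLinearMap p.asIdeal.primeCompl M) _).trans
        (by rw [Ideal.map_span, Set.image_image])
    set e := Submodule.quotEquivOfEq _ _ hEq with he
    by_contra hm0
    have hm0' : e.symm m ≠ 0 := fun h0 => hm0 (by
      rw [← e.apply_symm_apply m, h0, map_zero])
    have hsm : algebraMap R S (x i) • e.symm m = 0 := by
      rw [← map_smul, hm, map_zero]
    haveI : IsNoetherianRing S :=
      IsLocalization.isNoetherianRing p.asIdeal.primeCompl S ‹IsNoetherianRing R›
    obtain ⟨q', hq', hle⟩ :=
      exists_le_isAssociatedPrime_of_isNoetherianRing S (e.symm m) hm0'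
    have hxi' : algebraMap R S (x i) ∈ q' :=
      hle (by rw [aux_colon_bot_eq]; exact (Submodule.mem_annihilator_span_singleton _ _).mpr hsm)
    obtain ⟨hqass, hqle⟩ :=
      aux_comap_ass p.asIdeal (K.toLocalizedQuotient p.asIdeal.primeCompl) hq'
    exact h i _ hqass (fun hs => hap (hs.trans hqle)) (Ideal.mem_comap.mpr hxi')
  · intro h i q hq hanq hxi
    rw [AssociatedPrimes.mem_iff, isAssociatedPrime_iff] at hq
    have hqprime : q.IsPrime := hq.1
    haveI := hqprime
    set S := Localization.AtPrime q with hS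
    set K : Submodule R M := Ideal.span (x '' {j | j < i}) • ⊤ with hK
    obtain ⟨-, nn, hn⟩ := hq
    rw [aux_colon_bot_eq] at hn
    obtain ⟨n₀, hn₀⟩ := Submodule.Quotient.mk_surjective K nn
    have hp : (⟨q, hqprime⟩ : PrimeSpectrum R) ∈ Module.support R M := by
      refine Module.mem_support_iff_exists_annihilator.mpr ⟨n₀, fun r hr => ?_⟩
      have hr0 : r • n₀ = 0 := (Submodule.mem_annihilator_span_singleton _ _).mp hr
      have hz : r • nn = 0 := by
        rw [← hn₀, ← Submodule.Quotient.mk_smul, hr0, Submodule.Quotient.mk_zero]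
      show r ∈ q
      rw [hn]
      exact (Submodule.mem_annihilator_span_singleton _ _).mpr hz
    have hEq : K.localized q.primeCompl =
        Ideal.span ((fun j => algebraMap R S (x j)) '' {j | j < i}) •
          (⊤ : Submodule S (LocalizedModule q.primeCompl M)) := by
      rw [hK]
      exact (aux_localized'_smul_top q.primeCompl
        (LocalizedModule.mkLinearMap q.primeCompl M) _).trans
        (by rw [Ideal.map_span, Set.image_image])
    set e := Submodule.quotEquivOfEq _ _ hEq with he
    set g := K.toLocalizedQuotient q.primeCompl with hg
    have hxi2 : x i ∈ (Submodule.span R {nn}).annihilator := by rw [← hn]; exact hxi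
    have hsmul0 : (x i) • nn = 0 :=
      (Submodule.mem_annihilator_span_singleton _ _).mp hxi2
    have h0 : algebraMap R S (x i) • e (g nn) = 0 := by
      rw [← map_smul, algebraMap_smul, ← map_smul, hsmul0, map_zero, map_zero]
    have hz := h ⟨q, hqprime⟩ hp hanq i (e (g nn)) h0
    have hgz : g nn = 0 := by
      have := congrArg e.symm hz
      rwa [e.symm_apply_apply, map_zero] at this
    obtain ⟨c, hc⟩ := (IsLocalizedModule.eq_zero_iff q.primeCompl g).mp hgz
    have hc' : (c : R) • nn = 0 := by
      simpa [Submonoid.smul_def] using hc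
    have hcq : (c : R) ∈ q := by
      have h2 := (Submodule.mem_annihilator_span_singleton nn (c : R)).mpr hc'
      rwa [← hn] at h2
    exact c.2 hcq
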